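/- On R^4 with coordinates (x,y,z,v), the bivector P with components P^{xy} = 2x²y, P^{xz} = 2yz², P^{xv} = 2xyz + 2yzv, P^{yz} = -2xyz + 2yzv, P^{yv} = 2yv², P^{zv} = 2yz² is a Poisson bivector: [[P,P]] = 0. -/

import Mathlib

open scoped BigOperators

/-- Partial derivative `∂_k f` of a scalar function on `ℝ^r`. -/
noncomputable def pd {r : ℕ} (k : Fin r) (f : (Fin r → ℝ) → ℝ) : (Fin r → ℝ) → ℝ :=
  fun x => fderiv ℝ f x (Pi.single k 1)

/-- Components of the Schouten bracket (Lie derivative) `[[V,P]]` of a vector field `V`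
with a bivector `P`. -/
noncomputable def lieD {r : ℕ} (V : Fin r → (Fin r → ℝ) → ℝ)
    (P : Fin r → Fin r → (Fin r → ℝ) → ℝ) (i j : Fin r) (x : Fin r → ℝ) : ℝ :=
  ∑ k, (V k x * pd k (P i j) x - P k j x * pd k (V i) x - P i k x * pd k (V j) x)

/-- The cubic Poisson bivector on `ℝ^4 ≅ gl(2,ℝ)` associated with the `R`-matrix
`((x,y),(z,v)) ↦ ((x,y),(-z,v))`; coordinates `(x,y,z,v) = (w 0, w 1, w 2, w 3)`. -/
noncomputable def Pb : Fin 4 → Fin 4 → (Fin 4 → ℝ) → ℝ := fun i j w =>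
  let x := w 0; let y := w 1; let z := w 2; let v := w 3
  !![0,                      2*x^2*y,                 2*y*z^2,           2*x*y*z + 2*y*z*v;
     -(2*x^2*y),             0,                       -2*x*y*z + 2*y*z*v, 2*y*v^2;
     -(2*y*z^2),             -(-2*x*y*z + 2*y*z*v),   0,                 2*y*z^2;
     -(2*x*y*z + 2*y*z*v),   -(2*y*v^2),              -(2*y*z^2),        0] i j

lemma Pb_def : Pb = fun i j w =>
  let x := w 0; let y := w 1; let z := w 2; let v := w 3
  !![0,                      2*x^2*y,                 2*y*z^2,           2*x*y*z + 2*y*z*v;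
     -(2*x^2*y),             0,                       -2*x*y*z + 2*y*z*v, 2*y*v^2;
     -(2*y*z^2),             -(-2*x*y*z + 2*y*z*v),   0,                 2*y*z^2;
     -(2*x*y*z + 2*y*z*v),   -(2*y*v^2),              -(2*y*z^2),        0] i j := rfl

lemma fderiv_coord {r : ℕ} (i : Fin r) (x : Fin r → ℝ) :
    fderiv ℝ (fun y : Fin r → ℝ => y i) x = ContinuousLinearMap.proj i :=
  (hasFDerivAt_apply i x).fderiv

section helpers
variable (l : Fin 4) (x : Fin 4 → ℝ)

local notation "s" i => (Pi.single l (1:ℝ) : Fin 4 → ℝ) i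

lemma pd_zero : pd l (fun _ : Fin 4 → ℝ => (0:ℝ)) x = 0 := by
  simp [pd]

lemma pd_neg (f : (Fin 4 → ℝ) → ℝ) (hf : DifferentiableAt ℝ f x) :
    pd l (fun w => -(f w)) x = -(pd l f x) := by
  simp [pd, fderiv_neg]

lemma pd_f1 : pd l (fun w : Fin 4 → ℝ => 2 * w 0 ^ 2 * w 1) x
    = 4 * x 0 * x 1 * (s 0) + 2 * (x 0)^2 * (s 1) := by
  simp (disch := fun_prop) [pd, pow_two, fderiv_fun_mul, fderiv_const_mul, fderiv_coord]
  ring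

lemma pd_f2 : pd l (fun w : Fin 4 → ℝ => 2 * w 1 * w 2 ^ 2) x
    = 2 * (x 2)^2 * (s 1) + 4 * x 1 * x 2 * (s 2) := by
  simp (disch := fun_prop) [pd, pow_two, fderiv_fun_mul, fderiv_const_mul, fderiv_coord]
  ring

lemma pd_f3 : pd l (fun w : Fin 4 → ℝ => 2 * w 0 * w 1 * w 2 + 2 * w 1 * w 2 * w 3) x
    = 2 * x 1 * x 2 * (s 0) + (2 * x 0 * x 2 + 2 * x 2 * x 3) * (s 1)
      + (2 * x 0 * x 1 + 2 * x 1 * x 3) * (s 2) + 2 * x 1 * x 2 * (s 3) := by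
  simp (disch := fun_prop) [pd, fderiv_fun_add, fderiv_fun_mul, fderiv_const_mul, fderiv_coord]
  ring

lemma pd_f4 : pd l (fun w : Fin 4 → ℝ => -2 * w 0 * w 1 * w 2 + 2 * w 1 * w 2 * w 3) x
    = -2 * x 1 * x 2 * (s 0) + (-2 * x 0 * x 2 + 2 * x 2 * x 3) * (s 1)
      + (-2 * x 0 * x 1 + 2 * x 1 * x 3) * (s 2) + 2 * x 1 * x 2 * (s 3) := by
  simp (disch := fun_prop) [pd, fderiv_fun_add, fderiv_fun_mul, fderiv_const_mul, fderiv_coord]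
  ring

lemma pd_f5 : pd l (fun w : Fin 4 → ℝ => 2 * w 1 * w 3 ^ 2) x
    = 2 * (x 3)^2 * (s 1) + 4 * x 1 * x 3 * (s 3) := by
  simp (disch := fun_prop) [pd, pow_two, fderiv_fun_mul, fderiv_const_mul, fderiv_coord]
  ring


lemma pd_f4a : pd l (fun w : Fin 4 → ℝ => -(2 * w 0 * w 1 * w 2) + 2 * w 1 * w 2 * w 3) x
    = -2 * x 1 * x 2 * (s 0) + (-2 * x 0 * x 2 + 2 * x 2 * x 3) * (s 1)
      + (-2 * x 0 * x 1 + 2 * x 1 * x 3) * (s 2) + 2 * x 1 * x 2 * (s 3) := by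
  simp (disch := fun_prop) [pd, fderiv_fun_add, fderiv_fun_neg, fderiv_fun_mul, fderiv_const_mul, fderiv_coord]
  ring

lemma pd_f3n : pd l (fun w : Fin 4 → ℝ => -(2 * w 1 * w 2 * w 3) + -(2 * w 0 * w 1 * w 2)) x
    = -(2 * x 1 * x 2 * (s 0) + (2 * x 0 * x 2 + 2 * x 2 * x 3) * (s 1)
      + (2 * x 0 * x 1 + 2 * x 1 * x 3) * (s 2) + 2 * x 1 * x 2 * (s 3)) := by
  simp (disch := fun_prop) [pd, fderiv_fun_add, fderiv_fun_neg, fderiv_fun_mul, fderiv_const_mul, fderiv_coord]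
  ring

lemma pd_f4n : pd l (fun w : Fin 4 → ℝ => -(2 * w 1 * w 2 * w 3) + 2 * w 0 * w 1 * w 2) x
    = -(-2 * x 1 * x 2 * (s 0) + (-2 * x 0 * x 2 + 2 * x 2 * x 3) * (s 1)
      + (-2 * x 0 * x 1 + 2 * x 1 * x 3) * (s 2) + 2 * x 1 * x 2 * (s 3)) := by
  simp (disch := fun_prop) [pd, fderiv_fun_add, fderiv_fun_neg, fderiv_fun_mul, fderiv_const_mul, fderiv_coord]
  ring

end helpers

set_option maxHeartbeats 2000000 in
/-- the bivector `Pb` is Poisson: `[[Pb,Pb]] = 0`. -/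
theorem statement7 :
    ∀ (i j k : Fin 4) (x : Fin 4 → ℝ),
      ∑ l, (Pb l i x * pd l (Pb j k) x + Pb l j x * pd l (Pb k i) x
             + Pb l k x * pd l (Pb i j) x) = 0 := by
  intro i j k x
  fin_cases i <;> fin_cases j <;> fin_cases k <;>
    simp (disch := fun_prop) [Pb_def, Fin.sum_univ_four, pd_zero, pd_neg, pd_f1, pd_f2,
      pd_f3, pd_f4, pd_f5, pd_f4a, pd_f3n, pd_f4n, Pi.single_apply] <;> ring
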